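/- Let w ∈ ℝ² and let v₁, v₂ ∈ ℝ² be linearly independent unit vectors. Then for every r ≥ 0, the closed tube of radius r around the cone C(v₁,v₂,w) satisfies T(C(v₁,v₂,w), r) = C(v₁,v₂,w) ∪ R₁(r) ∪ R₂(r) ∪ R₃(r), where R₁(r) = {z ∈ ℝ² : ⟨v₁, z−w⟩ ≥ 0 and −r ≤ ⟨v₁^⊥, z−w⟩ ≤ 0}, R₃(r) = {z ∈ ℝ² : ⟨v₂, z−w⟩ ≥ 0 and −r ≤ ⟨v₂^⊥, z−w⟩ ≤ 0}, and R₂(r) = {w + tν : 0 ≤ t ≤ r, ν ∈ ℝ² a unit vector with ⟨ν, v₁⟩ ≤ 0 and ⟨ν, v₂⟩ ≤ 0}; moreover the pairwise intersections of the four sets C(v₁,v₂,w), R₁(r), R₂(r), R₃(r) are Lebesgue null sets. -/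

import Mathlib

open MeasureTheory Real
open scoped RealInnerProductSpace

local notation "E2" => EuclideanSpace ℝ (Fin 2)

lemma my_decomp (v p : E2) (hv : ‖v‖ = 1) (hp : ‖p‖ = 1) (hvp : ⟪p, v⟫ = 0) (x : E2) :
    x = ⟪v, x⟫ • v + ⟪p, x⟫ • p := by
  have hon : Orthonormal ℝ ![v, p] := by
    constructor
    · intro i; fin_cases i <;> simp [hv, hp]
    · intro i j hij
      fin_cases i <;> fin_cases j <;>
        simp_all [real_inner_comm p v, hvp]
  have hsp : Submodule.span ℝ (Set.range ![v, p]) = ⊤ :=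
    hon.linearIndependent.span_eq_top_of_card_eq_finrank (by simp)
  have hx : x ∈ Submodule.span ℝ (Set.range ![v, p]) := by rw [hsp]; trivial
  obtain ⟨c, hc⟩ := (Submodule.mem_span_range_iff_exists_fun ℝ).1 hx
  have hc' : c 0 • v + c 1 • p = x := by
    simpa [Fin.sum_univ_two] using hc
  have hvv : ⟪v, v⟫ = 1 := by rw [real_inner_self_eq_norm_mul_norm, hv, one_mul]
  have hpp : ⟪p, p⟫ = 1 := by rw [real_inner_self_eq_norm_mul_norm, hp, one_mul]
  have hvp' : ⟪v, p⟫ = 0 := by rw [real_inner_comm]; exact hvp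
  have h1 : ⟪v, x⟫ = c 0 := by
    rw [← hc']
    simp only [inner_add_right, real_inner_smul_right, hvv, hvp']
    ring
  have h2 : ⟪p, x⟫ = c 1 := by
    rw [← hc']
    simp only [inner_add_right, real_inner_smul_right, hpp, hvp]
    ring
  rw [h1, h2, hc']

lemma my_parseval (v p : E2) (hv : ‖v‖ = 1) (hp : ‖p‖ = 1) (hvp : ⟪p, v⟫ = 0) (x y : E2) :
    ⟪x, y⟫ = ⟪v, x⟫ * ⟪v, y⟫ + ⟪p, x⟫ * ⟪p, y⟫ := by
  nth_rewrite 1 [my_decomp v p hv hp hvp x]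
  simp only [inner_add_left, real_inner_smul_left]

lemma hyperplane_null (u w : E2) (hu : u ≠ 0) : volume {z : E2 | ⟪u, z - w⟫ = 0} = 0 := by
  have hK : volume ((ℝ ∙ u)ᗮ : Set E2) = 0 := by
    apply Measure.addHaar_submodule
    intro h
    have : u ∈ (ℝ ∙ u)ᗮ := h ▸ Submodule.mem_top
    rw [Submodule.mem_orthogonal_singleton_iff_inner_right] at this
    exact hu (inner_self_eq_zero.1 this)
  have heq : {z : E2 | ⟪u, z - w⟫ = 0} = (· + (-w)) ⁻¹' ((ℝ ∙ u)ᗮ : Set E2) := by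
    ext z
    simp [Submodule.mem_orthogonal_singleton_iff_inner_right, sub_eq_add_neg]
  rw [heq, measure_preimage_add_right]
  exact hK

lemma my_le_infDist {s : Set E2} {x : E2} {b : ℝ} (hs : s.Nonempty)
    (h : ∀ y ∈ s, b ≤ dist x y) : b ≤ Metric.infDist x s := by
  haveI := hs.to_subtype
  rw [Metric.infDist_eq_iInf]
  exact le_ciInf fun y => h y y.2

/-- The closed tube (r-thickening) of a set. -/
def tube {k : ℕ} (A : Set (EuclideanSpace ℝ (Fin k))) (r : ℝ) :
    Set (EuclideanSpace ℝ (Fin k)) :=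
  {y | Metric.infDist y A ≤ r}

/-- The cone `C(v₁,v₂,w) = {w + a₁v₁ + a₂v₂ : a₁, a₂ ≥ 0}` in `ℝ²`. -/
def cone2 (v₁ v₂ w : EuclideanSpace ℝ (Fin 2)) : Set (EuclideanSpace ℝ (Fin 2)) :=
  {z | ∃ a₁ a₂ : ℝ, 0 ≤ a₁ ∧ 0 ≤ a₂ ∧ z = w + a₁ • v₁ + a₂ • v₂}

/-- The side region `R₁(r)` (resp. `R₃(r)`) of the tube around the cone, along the
face spanned by `v` with inward conormal `p`. -/
def sideRegion (v p w : EuclideanSpace ℝ (Fin 2)) (r : ℝ) : Set (EuclideanSpace ℝ (Fin 2)) :=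
  {z | 0 ≤ ⟪v, z - w⟫ ∧ -r ≤ ⟪p, z - w⟫ ∧ ⟪p, z - w⟫ ≤ 0}

/-- The corner region `R₂(r)` of the tube around the cone. -/
def cornerRegion (v₁ v₂ w : EuclideanSpace ℝ (Fin 2)) (r : ℝ) :
    Set (EuclideanSpace ℝ (Fin 2)) :=
  {z | ∃ t : ℝ, ∃ ν : EuclideanSpace ℝ (Fin 2), 0 ≤ t ∧ t ≤ r ∧ ‖ν‖ = 1 ∧
    ⟪ν, v₁⟫ ≤ 0 ∧ ⟪ν, v₂⟫ ≤ 0 ∧ z = w + t • ν}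

set_option maxHeartbeats 8000000 in
theorem stmt13 (v₁ v₂ p₁ p₂ w : EuclideanSpace ℝ (Fin 2))
    (hv₁ : ‖v₁‖ = 1) (hv₂ : ‖v₂‖ = 1) (hli : LinearIndependent ℝ ![v₁, v₂])
    (hp₁ : ‖p₁‖ = 1) (hp₁v₁ : ⟪p₁, v₁⟫ = 0) (hp₁v₂ : 0 < ⟪p₁, v₂⟫)
    (hp₂ : ‖p₂‖ = 1) (hp₂v₂ : ⟪p₂, v₂⟫ = 0) (hp₂v₁ : 0 < ⟪p₂, v₁⟫)
    (r : ℝ) (hr : 0 ≤ r) :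
    tube (cone2 v₁ v₂ w) r =
      cone2 v₁ v₂ w ∪ sideRegion v₁ p₁ w r ∪ cornerRegion v₁ v₂ w r ∪ sideRegion v₂ p₂ w r ∧
    volume (cone2 v₁ v₂ w ∩ sideRegion v₁ p₁ w r) = 0 ∧
    volume (cone2 v₁ v₂ w ∩ cornerRegion v₁ v₂ w r) = 0 ∧
    volume (cone2 v₁ v₂ w ∩ sideRegion v₂ p₂ w r) = 0 ∧
    volume (sideRegion v₁ p₁ w r ∩ cornerRegion v₁ v₂ w r) = 0 ∧
    volume (sideRegion v₁ p₁ w r ∩ sideRegion v₂ p₂ w r) = 0 ∧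
    volume (cornerRegion v₁ v₂ w r ∩ sideRegion v₂ p₂ w r) = 0 := by
  -- scalar setup
  set c : ℝ := ⟪v₁, v₂⟫ with hcdef
  set s : ℝ := ⟪p₁, v₂⟫ with hsdef
  have hs : 0 < s := hp₁v₂
  have pars := my_parseval v₁ p₁ hv₁ hp₁ hp₁v₁
  have hcs : c ^ 2 + s ^ 2 = 1 := by
    have h := pars v₂ v₂
    have h2 : ⟪v₂, v₂⟫ = 1 := by rw [real_inner_self_eq_norm_mul_norm, hv₂, one_mul]
    rw [h2] at h; nlinarith [h]
  -- inner products of p₂ against the frame (v₁, p₁)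
  have hv₂p₂ : ⟪v₂, p₂⟫ = 0 := by rw [real_inner_comm]; exact hp₂v₂
  have e1 : c * ⟪v₁, p₂⟫ + s * ⟪p₁, p₂⟫ = 0 := by
    have h := pars v₂ p₂; rw [hv₂p₂] at h; linarith [h]
  have e2 : ⟪v₁, p₂⟫ ^ 2 + ⟪p₁, p₂⟫ ^ 2 = 1 := by
    have h := pars p₂ p₂
    have h2 : ⟪p₂, p₂⟫ = 1 := by rw [real_inner_self_eq_norm_mul_norm, hp₂, one_mul]
    rw [h2] at h; nlinarith [h]
  have e3 : 0 < ⟪v₁, p₂⟫ := by rw [real_inner_comm]; exact hp₂v₁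
  have hx2 : ⟪v₁, p₂⟫ = s ∧ ⟪p₁, p₂⟫ = -c := by
    set x : ℝ := ⟪v₁, p₂⟫
    set y : ℝ := ⟪p₁, p₂⟫
    have hd2 : (x * s - y * c) ^ 2 = 1 := by nlinarith [e1, e2, hcs]
    have hxd : x = s * (x * s - y * c) := by linear_combination c * e1 - x * hcs
    have hyd : y = -c * (x * s - y * c) := by linear_combination s * e1 - y * hcs
    have hd : x * s - y * c = 1 := by
      rcases sq_eq_one_iff.mp hd2 with h | h
      · exact h
      · exfalso; rw [h] at hxd; nlinarith [hxd, e3, hs]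
    constructor
    · rw [hxd, hd, mul_one]
    · rw [hyd, hd, mul_one]
  obtain ⟨hv₁p₂, hp₁p₂⟩ := hx2
  have hp₂v₁' : ⟪p₂, v₁⟫ = s := by rw [real_inner_comm]; exact hv₁p₂
  have hv₁v₁ : ⟪v₁, v₁⟫ = 1 := by rw [real_inner_self_eq_norm_mul_norm, hv₁, one_mul]
  have hdec : ∀ x : E2, x = ⟪v₁, x⟫ • v₁ + ⟪p₁, x⟫ • p₁ := my_decomp v₁ p₁ hv₁ hp₁ hp₁v₁
  have hdec2 : ∀ x : E2, x = ⟪v₂, x⟫ • v₂ + ⟪p₂, x⟫ • p₂ := my_decomp v₂ p₂ hv₂ hp₂ hp₂v₂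
  have hS₂rel : ∀ x : E2, ⟪v₂, x⟫ = c * ⟪v₁, x⟫ + s * ⟪p₁, x⟫ := by
    intro x; have h := pars v₂ x; rw [← hcdef, ← hsdef] at h; exact h
  have hBrel : ∀ x : E2, ⟪p₂, x⟫ = s * ⟪v₁, x⟫ - c * ⟪p₁, x⟫ := by
    intro x; have h := pars p₂ x; rw [hv₁p₂, hp₁p₂] at h; linarith
  have ext2 : ∀ x y : E2, ⟪v₁, x⟫ = ⟪v₁, y⟫ → ⟪p₁, x⟫ = ⟪p₁, y⟫ → x = y := by
    intro x y h1 h2; rw [hdec x, hdec y, h1, h2]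
  -- membership in the cone via the conormals
  have coneIff : ∀ z : E2, z ∈ cone2 v₁ v₂ w ↔ (0 ≤ ⟪p₁, z - w⟫ ∧ 0 ≤ ⟪p₂, z - w⟫) := by
    intro z
    constructor
    · rintro ⟨a₁, a₂, ha₁, ha₂, rfl⟩
      have hzw : w + a₁ • v₁ + a₂ • v₂ - w = a₁ • v₁ + a₂ • v₂ := by abel
      rw [hzw]
      constructor
      · simp only [inner_add_right, real_inner_smul_right, hp₁v₁, ← hsdef]
        nlinarith [mul_nonneg ha₂ hs.le]
      · simp only [inner_add_right, real_inner_smul_right, hp₂v₂, hp₂v₁']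
        nlinarith [mul_nonneg ha₁ hs.le]
    · rintro ⟨hA, hB0⟩
      refine ⟨⟪p₂, z - w⟫ / s, ⟪p₁, z - w⟫ / s, div_nonneg hB0 hs.le, div_nonneg hA hs.le, ?_⟩
      have key : z - w = (⟪p₂, z - w⟫ / s) • v₁ + (⟪p₁, z - w⟫ / s) • v₂ := by
        apply ext2
        · simp only [inner_add_right, real_inner_smul_right, hv₁v₁, ← hcdef]
          rw [hBrel (z - w)]
          field_simp
          ring
        · simp only [inner_add_right, real_inner_smul_right, hp₁v₁, ← hsdef]
          field_simp
          ring
      rw [add_assoc, ← key]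
      abel
  have hwC : w ∈ cone2 v₁ v₂ w := ⟨0, 0, le_refl 0, le_refl 0, by simp⟩
  have hCne : (cone2 v₁ v₂ w).Nonempty := ⟨w, hwC⟩
  -- lower bounds for the distance to the cone
  have LB1 : ∀ z : E2, -⟪p₁, z - w⟫ ≤ Metric.infDist z (cone2 v₁ v₂ w) := by
    intro z
    apply my_le_infDist hCne
    rintro y ⟨a₁, a₂, ha₁, ha₂, rfl⟩
    rw [dist_eq_norm]
    have hzy : z - (w + a₁ • v₁ + a₂ • v₂) = (z - w) - a₁ • v₁ - a₂ • v₂ := by abel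
    have hip : ⟪p₁, z - (w + a₁ • v₁ + a₂ • v₂)⟫ = ⟪p₁, z - w⟫ - a₂ * s := by
      rw [hzy]
      simp only [inner_sub_right, real_inner_smul_right, hp₁v₁, ← hsdef]
      ring
    have h1 : |⟪p₁, z - (w + a₁ • v₁ + a₂ • v₂)⟫| ≤ ‖z - (w + a₁ • v₁ + a₂ • v₂)‖ := by
      have := abs_real_inner_le_norm p₁ (z - (w + a₁ • v₁ + a₂ • v₂))
      rwa [hp₁, one_mul] at this
    rw [hip] at h1
    have h2 := neg_abs_le (⟪p₁, z - w⟫ - a₂ * s)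
    have h3 := mul_nonneg ha₂ hs.le
    linarith
  have LB2 : ∀ z : E2, -⟪p₂, z - w⟫ ≤ Metric.infDist z (cone2 v₁ v₂ w) := by
    intro z
    apply my_le_infDist hCne
    rintro y ⟨a₁, a₂, ha₁, ha₂, rfl⟩
    rw [dist_eq_norm]
    have hzy : z - (w + a₁ • v₁ + a₂ • v₂) = (z - w) - a₁ • v₁ - a₂ • v₂ := by abel
    have hip : ⟪p₂, z - (w + a₁ • v₁ + a₂ • v₂)⟫ = ⟪p₂, z - w⟫ - a₁ * s := by
      rw [hzy]
      simp only [inner_sub_right, real_inner_smul_right, hp₂v₂, hp₂v₁']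
      ring
    have h1 : |⟪p₂, z - (w + a₁ • v₁ + a₂ • v₂)⟫| ≤ ‖z - (w + a₁ • v₁ + a₂ • v₂)‖ := by
      have := abs_real_inner_le_norm p₂ (z - (w + a₁ • v₁ + a₂ • v₂))
      rwa [hp₂, one_mul] at this
    rw [hip] at h1
    have h2 := neg_abs_le (⟪p₂, z - w⟫ - a₁ * s)
    have h3 := mul_nonneg ha₁ hs.le
    linarith
  have LB3 : ∀ z : E2, ⟪z - w, v₁⟫ ≤ 0 → ⟪z - w, v₂⟫ ≤ 0 →
      ‖z - w‖ ≤ Metric.infDist z (cone2 v₁ v₂ w) := by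
    intro z h1 h2
    apply my_le_infDist hCne
    rintro y ⟨a₁, a₂, ha₁, ha₂, rfl⟩
    rw [dist_eq_norm]
    have hzy : z - (w + a₁ • v₁ + a₂ • v₂) = (z - w) - (a₁ • v₁ + a₂ • v₂) := by abel
    rw [hzy]
    have hsq := norm_sub_sq_real (z - w) (a₁ • v₁ + a₂ • v₂)
    have hip : ⟪z - w, a₁ • v₁ + a₂ • v₂⟫ = a₁ * ⟪z - w, v₁⟫ + a₂ * ⟪z - w, v₂⟫ := by
      simp only [inner_add_right, real_inner_smul_right]
    have hle : ‖z - w‖ ^ 2 ≤ ‖(z - w) - (a₁ • v₁ + a₂ • v₂)‖ ^ 2 := by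
      rw [hsq, hip]
      nlinarith [mul_nonpos_of_nonneg_of_nonpos ha₁ h1,
        mul_nonpos_of_nonneg_of_nonpos ha₂ h2, sq_nonneg ‖a₁ • v₁ + a₂ • v₂‖]
    have := Real.sqrt_le_sqrt hle
    rwa [Real.sqrt_sq (norm_nonneg _), Real.sqrt_sq (norm_nonneg _)] at this
  -- a unit vector in the polar cone (for the corner at w itself)
  have hc1 : -1 < c := by nlinarith [mul_pos hs hs, hcs]
  have hsum : v₁ + v₂ ≠ 0 := by
    intro h
    have h2 : ⟪p₁, v₁ + v₂⟫ = 0 := by rw [h, inner_zero_right]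
    rw [inner_add_right, hp₁v₁, ← hsdef] at h2
    linarith
  -- corner membership when both v-inner-products are nonpositive
  have cornerMem : ∀ z : E2, Metric.infDist z (cone2 v₁ v₂ w) ≤ r →
      ⟪z - w, v₁⟫ ≤ 0 → ⟪z - w, v₂⟫ ≤ 0 → z ∈ cornerRegion v₁ v₂ w r := by
    intro z hzd h1 h2
    rcases eq_or_ne z w with rfl | hzw
    · refine ⟨0, ‖-(v₁ + v₂)‖⁻¹ • -(v₁ + v₂), le_refl 0, hr, ?_, ?_, ?_, by simp⟩
      · exact norm_smul_inv_norm (𝕜 := ℝ) (neg_ne_zero.mpr hsum)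
      · have h21 : ⟪v₂, v₁⟫ = c := (real_inner_comm v₁ v₂).trans hcdef.symm
        rw [real_inner_smul_left, inner_neg_left, inner_add_left, hv₁v₁, h21]
        have : (0:ℝ) ≤ ‖-(v₁ + v₂)‖⁻¹ := inv_nonneg.mpr (norm_nonneg _)
        nlinarith
      · have hv₂v₂ : ⟪v₂, v₂⟫ = 1 := by rw [real_inner_self_eq_norm_mul_norm, hv₂, one_mul]
        have h12 : ⟪v₁, v₂⟫ = c := hcdef.symm
        rw [real_inner_smul_left, inner_neg_left, inner_add_left, hv₂v₂, h12]
        have : (0:ℝ) ≤ ‖-(v₁ + v₂)‖⁻¹ := inv_nonneg.mpr (norm_nonneg _)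
        nlinarith
    · have hzw0 : z - w ≠ 0 := sub_ne_zero.mpr hzw
      have hn : 0 < ‖z - w‖ := norm_pos_iff.mpr hzw0
      refine ⟨‖z - w‖, ‖z - w‖⁻¹ • (z - w), norm_nonneg _, le_trans (LB3 z h1 h2) hzd,
        norm_smul_inv_norm (𝕜 := ℝ) hzw0, ?_, ?_, ?_⟩
      · rw [real_inner_smul_left]
        exact mul_nonpos_of_nonneg_of_nonpos (inv_nonneg.mpr (norm_nonneg _)) h1
      · rw [real_inner_smul_left]
        exact mul_nonpos_of_nonneg_of_nonpos (inv_nonneg.mpr (norm_nonneg _)) h2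
      · rw [smul_inv_smul₀ (norm_ne_zero_iff.mpr hzw0)]
        abel
  have hne : ∀ u : E2, ‖u‖ = (1:ℝ) → u ≠ 0 := by
    intro u hu h; rw [h, norm_zero] at hu; norm_num at hu
  refine ⟨?_, ?_, ?_, ?_, ?_, ?_, ?_⟩
  · -- the tube equality
    ext z
    simp only [tube, Set.mem_setOf_eq, Set.mem_union]
    constructor
    · intro h
      by_cases hA : 0 ≤ ⟪p₁, z - w⟫
      · by_cases hB : 0 ≤ ⟪p₂, z - w⟫
        · exact Or.inl (Or.inl (Or.inl ((coneIff z).2 ⟨hA, hB⟩)))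
        · push_neg at hB
          by_cases hS2 : 0 ≤ ⟪v₂, z - w⟫
          · exact Or.inr ⟨hS2, by linarith [LB2 z], hB.le⟩
          · push_neg at hS2
            by_cases hS1 : ⟪v₁, z - w⟫ ≤ 0
            · refine Or.inl (Or.inr (cornerMem z h ?_ ?_))
              · rw [real_inner_comm v₁ (z - w)]; exact hS1
              · rw [real_inner_comm v₂ (z - w)]; exact hS2.le
            · exfalso
              push_neg at hS1
              have h1 := hS₂rel (z - w)
              have h2 := hBrel (z - w)
              have hcS : c * ⟪v₁, z - w⟫ < 0 := by nlinarith [mul_nonneg hs.le hA]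
              have hcneg : c < 0 := by
                by_contra hcge
                push_neg at hcge
                exact absurd (mul_nonneg hcge hS1.le) (not_le.2 hcS)
              nlinarith [mul_pos hs hS1, mul_nonpos_of_nonpos_of_nonneg hcneg.le hA]
      · push_neg at hA
        by_cases hS1 : 0 ≤ ⟪v₁, z - w⟫
        · exact Or.inl (Or.inl (Or.inr ⟨hS1, by linarith [LB1 z], hA.le⟩))
        · push_neg at hS1
          by_cases hS2 : ⟪v₂, z - w⟫ ≤ 0
          · refine Or.inl (Or.inr (cornerMem z h ?_ ?_))
            · rw [real_inner_comm v₁ (z - w)]; exact hS1.le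
            · rw [real_inner_comm v₂ (z - w)]; exact hS2
          · push_neg at hS2
            have h1 := hS₂rel (z - w)
            have h2 := hBrel (z - w)
            have hcS : 0 < c * ⟪v₁, z - w⟫ := by
              nlinarith [mul_neg_of_pos_of_neg hs hA]
            have hcneg : c < 0 := by
              by_contra hcge
              push_neg at hcge
              exact absurd (mul_nonpos_of_nonneg_of_nonpos hcge hS1.le) (not_le.2 hcS)
            have hBneg : ⟪p₂, z - w⟫ < 0 := by
              nlinarith [mul_neg_of_pos_of_neg hs hS1, mul_pos_of_neg_of_neg hcneg hA]
            exact Or.inr ⟨hS2.le, by linarith [LB2 z], hBneg.le⟩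
    · rintro (((hzC | hzS1) | hzCor) | hzS2)
      · have hd := Metric.infDist_le_dist_of_mem (x := z) hzC
        rw [dist_self] at hd
        linarith
      · obtain ⟨hS1, hlb, hub⟩ := hzS1
        have hyC : w + ⟪v₁, z - w⟫ • v₁ + (0:ℝ) • v₂ ∈ cone2 v₁ v₂ w :=
          ⟨_, 0, hS1, le_refl 0, rfl⟩
        have hd := Metric.infDist_le_dist_of_mem (x := z) hyC
        have hh := hdec (z - w)
        have h2 : (z - w) - ⟪v₁, z - w⟫ • v₁ = ⟪p₁, z - w⟫ • p₁ :=
          sub_eq_iff_eq_add.mpr (hh.trans (add_comm _ _))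
        have hzy : z - (w + ⟪v₁, z - w⟫ • v₁ + (0:ℝ) • v₂) = ⟪p₁, z - w⟫ • p₁ := by
          rw [zero_smul, add_zero, ← h2]
          abel
        rw [dist_eq_norm, hzy, norm_smul, hp₁, mul_one, Real.norm_eq_abs,
          abs_of_nonpos hub] at hd
        linarith
      · obtain ⟨t, ν, ht0, htr, hν, _, _, rfl⟩ := hzCor
        have hd := Metric.infDist_le_dist_of_mem (x := w + t • ν) hwC
        rw [dist_eq_norm] at hd
        have hzy : w + t • ν - w = t • ν := by abel
        rw [hzy, norm_smul, hν, mul_one, Real.norm_eq_abs, abs_of_nonneg ht0] at hd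
        linarith
      · obtain ⟨hS2, hlb, hub⟩ := hzS2
        have hyC : w + (0:ℝ) • v₁ + ⟪v₂, z - w⟫ • v₂ ∈ cone2 v₁ v₂ w :=
          ⟨0, _, le_refl 0, hS2, rfl⟩
        have hd := Metric.infDist_le_dist_of_mem (x := z) hyC
        have hh := hdec2 (z - w)
        have h2 : (z - w) - ⟪v₂, z - w⟫ • v₂ = ⟪p₂, z - w⟫ • p₂ :=
          sub_eq_iff_eq_add.mpr (hh.trans (add_comm _ _))
        have hzy : z - (w + (0:ℝ) • v₁ + ⟪v₂, z - w⟫ • v₂) = ⟪p₂, z - w⟫ • p₂ := by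
          rw [zero_smul, ← h2]
          abel
        rw [dist_eq_norm, hzy, norm_smul, hp₂, mul_one, Real.norm_eq_abs,
          abs_of_nonpos hub] at hd
        linarith
  · -- cone ∩ side₁
    apply measure_mono_null _ (hyperplane_null p₁ w (hne p₁ hp₁))
    rintro z ⟨hzC, hzS⟩
    exact le_antisymm hzS.2.2 ((coneIff z).1 hzC).1
  · -- cone ∩ corner
    apply measure_mono_null _ (hyperplane_null v₁ w (hne v₁ hv₁))
    rintro z ⟨hzC, t, ν, ht0, htr, hν, hν1, hν2, hz⟩
    obtain ⟨a₁, a₂, ha₁, ha₂, hz2⟩ := hzC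
    have hzw : z - w = t • ν := by rw [hz]; abel
    have hS1 : ⟪z - w, v₁⟫ ≤ 0 := by
      rw [hzw, real_inner_smul_left]
      exact mul_nonpos_of_nonneg_of_nonpos ht0 hν1
    have hS2 : ⟪z - w, v₂⟫ ≤ 0 := by
      rw [hzw, real_inner_smul_left]
      exact mul_nonpos_of_nonneg_of_nonpos ht0 hν2
    have hz3 : z - w = a₁ • v₁ + a₂ • v₂ := by rw [hz2]; abel
    have hself : ⟪z - w, z - w⟫ ≤ 0 := by
      nth_rewrite 2 [hz3]
      rw [inner_add_right, real_inner_smul_right, real_inner_smul_right]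
      nlinarith [mul_nonpos_of_nonneg_of_nonpos ha₁ hS1,
        mul_nonpos_of_nonneg_of_nonpos ha₂ hS2]
    have hz0 : z - w = 0 := real_inner_self_nonpos.mp hself
    show ⟪v₁, z - w⟫ = 0
    rw [hz0, inner_zero_right]
  · -- cone ∩ side₂
    apply measure_mono_null _ (hyperplane_null p₂ w (hne p₂ hp₂))
    rintro z ⟨hzC, hzS⟩
    exact le_antisymm hzS.2.2 ((coneIff z).1 hzC).2
  · -- side₁ ∩ corner
    apply measure_mono_null _ (hyperplane_null v₁ w (hne v₁ hv₁))
    rintro z ⟨hzS, t, ν, ht0, htr, hν, hν1, hν2, hz⟩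
    have hzw : z - w = t • ν := by rw [hz]; abel
    have hS1 : ⟪v₁, z - w⟫ ≤ 0 := by
      rw [real_inner_comm (z - w) v₁, hzw, real_inner_smul_left]
      exact mul_nonpos_of_nonneg_of_nonpos ht0 hν1
    exact le_antisymm hS1 hzS.1
  · -- side₁ ∩ side₂
    apply measure_mono_null _ (hyperplane_null v₁ w (hne v₁ hv₁))
    rintro z ⟨hz1, hz3⟩
    obtain ⟨hS1, _, hA⟩ := hz1
    obtain ⟨hS2, _, hB⟩ := hz3
    have h1 := hS₂rel (z - w)
    have h2 := hBrel (z - w)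
    have hq : s * (⟪v₁, z - w⟫ ^ 2 + ⟪p₁, z - w⟫ ^ 2) ≤ 0 := by
      nlinarith [mul_nonpos_of_nonneg_of_nonpos hS1 hB,
        mul_nonpos_of_nonpos_of_nonneg hA hS2]
    have hsq : ⟪v₁, z - w⟫ ^ 2 = 0 := by
      nlinarith [sq_nonneg ⟪v₁, z - w⟫, sq_nonneg ⟪p₁, z - w⟫]
    exact pow_eq_zero_iff (by norm_num) |>.mp hsq
  · -- corner ∩ side₂
    apply measure_mono_null _ (hyperplane_null v₂ w (hne v₂ hv₂))
    rintro z ⟨⟨t, ν, ht0, htr, hν, hν1, hν2, hz⟩, hzS⟩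
    have hzw : z - w = t • ν := by rw [hz]; abel
    have hS2 : ⟪v₂, z - w⟫ ≤ 0 := by
      rw [real_inner_comm (z - w) v₂, hzw, real_inner_smul_left]
      exact mul_nonpos_of_nonneg_of_nonpos ht0 hν2
    exact le_antisymm hS2 hzS.1
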